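/- Theorem 1(ii): Suppose S_N is a grid in the bounded design space S such that for every point x ∈ S there exist grid points u_N ∈ S_N with u_N → x as N → ∞, and x ↦ I(x, θ*) is entrywise continuous. Then the optimal approximate designs ξ*_{φ,N} on S_N satisfy lim_{N→∞} Eff_φ(ξ*_{φ,N}) = 1. -/

import Mathlib

open Filter

/-- An approximate design: finitely many support points with nonnegative weights summing to 1. -/
structure Design (E : Type*) where
  m : ℕ
  pts : Fin m → E
  w : Fin m → ℝ
  w_nonneg : ∀ i, 0 ≤ w i
  w_sum : ∑ i, w i = 1

/-- Information matrix `I(ξ, θ*) = Σ_i w_i I(v_i, θ*)` of an approximate design. -/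
noncomputable def Design.info {E : Type*} {q : ℕ}
    (Info : E → Matrix (Fin q) (Fin q) ℝ) (d : Design E) : Matrix (Fin q) (Fin q) ℝ :=
  ∑ i, d.w i • Info (d.pts i)

/-- Theorem 1(ii): Suppose `S_N` is a grid in the bounded design space `S` such
that every point `x ∈ S` is a limit of grid points `u_N ∈ S_N` as `N → ∞`, and `x ↦ I(x,θ*)`
is entrywise continuous. Then the optimal approximate designs `ξ*_{φ,N}` on `S_N` satisfy
`lim_{N→∞} Eff_φ(ξ*_{φ,N}) = 1`, where `Eff_φ(ξ) = Φ(ξ*_φ)/Φ(ξ)` with `Φ(ξ) = φ(I(ξ))`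
continuous in the information matrix and positive-valued. -/
theorem stmt8
    {p q : ℕ} (S : Set (Fin p → ℝ)) (hSbdd : Bornology.IsBounded S)
    (SN : ℕ → Set (Fin p → ℝ)) (hSNsub : ∀ N, SN N ⊆ S)
    (hgrid : ∀ x ∈ S, ∃ u : ℕ → (Fin p → ℝ),
      (∀ N, u N ∈ SN N) ∧ Tendsto u atTop (nhds x))
    (Info : (Fin p → ℝ) → Matrix (Fin q) (Fin q) ℝ)
    (hInfoCont : ∀ a b, ContinuousOn (fun x => Info x a b) S)
    (φ : Matrix (Fin q) (Fin q) ℝ → ℝ)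
    (hφpos : ∀ M, 0 < φ M)
    -- the optimal approximate design ξ*_φ on S
    (ξstar : Design (Fin p → ℝ))
    (hξstarS : ∀ i, ξstar.pts i ∈ S)
    (hφcont : ContinuousAt φ (ξstar.info Info))
    (hoptS : ∀ d : Design (Fin p → ℝ), (∀ i, d.pts i ∈ S) →
      φ (ξstar.info Info) ≤ φ (d.info Info))
    -- the optimal approximate design on the grid S_N, for each N
    (ξN : ℕ → Design (Fin p → ℝ))
    (hξNmem : ∀ N i, (ξN N).pts i ∈ SN N)
    (hξNopt : ∀ (N : ℕ) (d : Design (Fin p → ℝ)), (∀ i, d.pts i ∈ SN N) →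
      φ ((ξN N).info Info) ≤ φ (d.info Info)) :
    Tendsto (fun N : ℕ => φ (ξstar.info Info) / φ ((ξN N).info Info))
      atTop (nhds 1) := by
  -- choose approximating grid sequences for each support point of ξstar
  choose u hu hulim using fun i => hgrid (ξstar.pts i) (hξstarS i)
  -- designs on the grid approximating ξstar
  set d : ℕ → Design (Fin p → ℝ) := fun N =>
    ⟨ξstar.m, fun i => u i N, ξstar.w, ξstar.w_nonneg, ξstar.w_sum⟩ with hd
  have hInfo_tendsto : ∀ i, Tendsto (fun N => Info (u i N)) atTop (nhds (Info (ξstar.pts i))) := by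
    intro i
    refine tendsto_pi_nhds.2 ?_
    intro a
    rw [tendsto_pi_nhds]
    intro b
    have := (hInfoCont a b (ξstar.pts i) (hξstarS i)).tendsto
    exact this.comp (tendsto_nhdsWithin_iff.2 ⟨hulim i, Eventually.of_forall fun N => hSNsub N (hu i N)⟩)
  have hdinfo : Tendsto (fun N => (d N).info Info) atTop (nhds (ξstar.info Info)) := by
    simp only [hd, Design.info]
    show Tendsto (fun N => ∑ i, ξstar.w i • Info (u i N)) atTop (nhds (∑ i, ξstar.w i • Info (ξstar.pts i)))
    exact tendsto_finset_sum _ fun i _ => ((hInfo_tendsto i).const_smul _)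
  have hφd : Tendsto (fun N => φ ((d N).info Info)) atTop (nhds (φ (ξstar.info Info))) :=
    hφcont.tendsto.comp hdinfo
  have hsq : Tendsto (fun N => φ ((ξN N).info Info)) atTop (nhds (φ (ξstar.info Info))) := by
    refine tendsto_of_tendsto_of_tendsto_of_le_of_le tendsto_const_nhds hφd ?_ ?_
    · intro N
      exact hoptS (ξN N) fun i => hSNsub N (hξNmem N i)
    · intro N
      exact hξNopt N (d N) fun i => hu i N
  have h1 : Tendsto (fun N : ℕ => φ (ξstar.info Info) / φ ((ξN N).info Info)) atTop
      (nhds (φ (ξstar.info Info) / φ (ξstar.info Info))) :=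
    tendsto_const_nhds.div hsq (hφpos _).ne'
  rwa [div_self (hφpos _).ne'] at h1
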